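/- Let ξ: ℝⁿ → ℝ be continuous such that ξ̄(θ) = lim_{λ→∞} ξ(λθ)/λ exists finitely and uniformly in θ ∈ S^{n-1}. Define ξ̂ on the open lower half-sphere Sⁿ_- = {(x,t) ∈ Sⁿ ⊂ ℝⁿ⁺¹ : t < 0} by ξ̂(x,t) = |t|·ξ(x/|t|). Then the function h on the closed lower half-sphere given by h(x,t) = ξ̂(x,t) for t < 0 and h(x,0) = ξ̄(x) for (x,0) with |x| = 1, is continuous. -/

import Mathlib

private lemma sq_eq_one_nonneg {a : ℝ} (h0 : 0 ≤ a) (h1 : a ^ 2 = 1) : a = 1 := by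
  have h2 : (a - 1) * (a + 1) = 0 := by linear_combination h1
  rcases mul_eq_zero.mp h2 with h | h
  · linarith
  · linarith

/-- If `ξ : ℝⁿ → ℝ` is continuous and `ξ̄(θ) = lim_{λ→∞} ξ(λθ)/λ` exists
uniformly in `θ ∈ S^{n-1}`, then the function `h` on the closed lower half-sphere of `Sⁿ`,
given by `h(x,t) = |t|ξ(x/|t|)` for `t < 0` and `h(x,0) = ξ̄(x)`, is continuous. -/
theorem statement13 (n : ℕ) (ξ : EuclideanSpace ℝ (Fin n) → ℝ) (hξ : Continuous ξ)
    (ξbar : EuclideanSpace ℝ (Fin n) → ℝ)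
    (huni : ∀ ε > (0 : ℝ), ∃ Λ : ℝ, ∀ lam ≥ Λ, ∀ θ : EuclideanSpace ℝ (Fin n), ‖θ‖ = 1 →
      |ξ (lam • θ) / lam - ξbar θ| < ε)
    (h : EuclideanSpace ℝ (Fin n) × ℝ → ℝ)
    (hh : ∀ p : EuclideanSpace ℝ (Fin n) × ℝ,
      h p = if p.2 < 0 then |p.2| * ξ ((|p.2|)⁻¹ • p.1) else ξbar p.1) :
    ContinuousOn h {p : EuclideanSpace ℝ (Fin n) × ℝ | ‖p.1‖ ^ 2 + p.2 ^ 2 = 1 ∧ p.2 ≤ 0} := by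
  -- continuity of ξbar on the unit sphere, by uniform convergence
  have hcont : ContinuousOn ξbar {θ : EuclideanSpace ℝ (Fin n) | ‖θ‖ = 1} := by
    have hU : TendstoUniformlyOn (fun (lam : ℝ) θ => ξ (lam • θ) / lam) ξbar Filter.atTop
        {θ : EuclideanSpace ℝ (Fin n) | ‖θ‖ = 1} := by
      rw [Metric.tendstoUniformlyOn_iff]
      intro ε hε
      obtain ⟨Λ, hΛ⟩ := huni ε hε
      filter_upwards [Filter.eventually_ge_atTop Λ] with lam hlam θ hθ
      rw [Real.dist_eq, abs_sub_comm]
      exact hΛ lam hlam θ hθ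
    refine hU.continuousOn ?_
    apply Filter.Eventually.frequently
    filter_upwards with lam
    exact ((hξ.comp (continuous_id.const_smul lam)).div_const lam).continuousOn
  intro p hp
  obtain ⟨hp1, hp2⟩ := hp
  rcases hp2.lt_or_eq with ht | ht
  · -- interior case: p.2 < 0
    apply ContinuousAt.continuousWithinAt
    have hev : h =ᶠ[nhds p] fun q : EuclideanSpace ℝ (Fin n) × ℝ =>
        |q.2| * ξ ((|q.2|)⁻¹ • q.1) := by
      have hopen : ∀ᶠ q : EuclideanSpace ℝ (Fin n) × ℝ in nhds p, q.2 < 0 :=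
        (isOpen_Iio.preimage continuous_snd).eventually_mem ht
      filter_upwards [hopen] with q hq
      rw [hh q, if_pos hq]
    have hg : ContinuousAt (fun q : EuclideanSpace ℝ (Fin n) × ℝ =>
        |q.2| * ξ ((|q.2|)⁻¹ • q.1)) p := by
      have h2 : ContinuousAt (fun q : EuclideanSpace ℝ (Fin n) × ℝ => |q.2|) p :=
        (continuous_snd.abs).continuousAt
      have h3 : ContinuousAt (fun q : EuclideanSpace ℝ (Fin n) × ℝ => (|q.2|)⁻¹) p :=
        h2.inv₀ (abs_ne_zero.mpr ht.ne)
      exact h2.mul (hξ.continuousAt.comp (h3.smul continuous_fst.continuousAt))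
    exact hg.congr hev.symm
  · -- boundary case: p.2 = 0
    have hx₀ : ‖p.1‖ = 1 := by
      refine sq_eq_one_nonneg (norm_nonneg p.1) ?_
      rw [ht] at hp1; simpa using hp1
    have hc := hcont p.1 hx₀
    rw [Metric.continuousWithinAt_iff] at hc ⊢
    intro ε hε
    obtain ⟨δ₁, hδ₁pos, hδ₁⟩ := hc (ε / 4) (by linarith)
    obtain ⟨Λ, hΛ⟩ := huni (ε / 4) (by linarith)
    set M : ℝ := |ξbar p.1| + ε / 4 with hMdef
    have hMpos : 0 < M := by positivity
    clear_value M
    set Λ' : ℝ := max Λ 1 with hΛ'def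
    have hΛ'pos : (0 : ℝ) < Λ' := lt_of_lt_of_le one_pos (le_max_right _ _)
    have hΛ'ge : Λ ≤ Λ' := le_max_left _ _
    clear_value Λ'
    set δ : ℝ := min (min (δ₁ / 2) (ε / (4 * M))) (min (1 / (2 * Λ')) (1 / 2)) with hδdef
    have hδpos : 0 < δ := by
      refine lt_min (lt_min (by linarith) (by positivity)) (lt_min (by positivity) (by norm_num))
    have hδle1 : δ ≤ δ₁ / 2 := le_trans (min_le_left _ _) (min_le_left _ _)
    have hδle2 : δ ≤ ε / (4 * M) := le_trans (min_le_left _ _) (min_le_right _ _)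
    have hδle3 : δ ≤ 1 / (2 * Λ') := le_trans (min_le_right _ _) (min_le_left _ _)
    have hδle4 : δ ≤ 1 / 2 := le_trans (min_le_right _ _) (min_le_right _ _)
    clear_value δ
    have hδlt1 : δ ≤ 1 := by linarith
    have hδsq : δ ^ 2 ≤ δ := by
      have h1 : δ * δ ≤ 1 * δ := mul_le_mul_of_nonneg_right hδlt1 hδpos.le
      calc δ ^ 2 = δ * δ := sq δ
        _ ≤ 1 * δ := h1
        _ = δ := one_mul δ
    refine ⟨δ, hδpos, ?_⟩
    rintro q ⟨hq1, hq2⟩ hdist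
    have hd1 : dist q.1 p.1 < δ := lt_of_le_of_lt (by rw [Prod.dist_eq]; exact le_max_left _ _) hdist
    have hd2 : dist q.2 p.2 < δ := lt_of_le_of_lt (by rw [Prod.dist_eq]; exact le_max_right _ _) hdist
    have hpval : h p = ξbar p.1 := by rw [hh p]; simp [ht]
    have ht' : |q.2| < δ := by rw [Real.dist_eq, ht, sub_zero] at hd2; exact hd2
    rcases hq2.lt_or_eq with hq2' | hq2'
    · -- q.2 < 0
      set t := q.2 with htdef
      set x := q.1 with hxdef
      set a := ‖x‖ with hadef
      have ha2 : a ^ 2 = 1 - t ^ 2 := by linarith [hq1]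
      have hann : 0 ≤ a := norm_nonneg x
      clear_value a
      have hale : a ≤ 1 := by
        refine (pow_le_one_iff_of_nonneg hann two_ne_zero).mp ?_
        rw [ha2]; linarith [sq_nonneg t]
      have h1a : 1 - a ≤ t ^ 2 := by
        have h1 : a * a ≤ 1 * a := mul_le_mul_of_nonneg_right hale hann
        have h2 : a ^ 2 = a * a := sq a
        linarith
      have htδ : t ^ 2 < δ ^ 2 := by
        have := pow_lt_pow_left₀ ht' (abs_nonneg t) two_ne_zero
        rwa [sq_abs] at this
      have h1a' : 1 - a ≤ δ ^ 2 := le_of_lt (lt_of_le_of_lt h1a htδ)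
      have hage : 1 / 2 ≤ a := by linarith
      have hapos : 0 < a := by linarith
      have htpos : 0 < |t| := abs_pos.mpr hq2'.ne
      set θ := a⁻¹ • x with hθdef
      have hθnorm : ‖θ‖ = 1 := by
        rw [hθdef, norm_smul, norm_inv, Real.norm_eq_abs, abs_of_pos hapos, ← hadef,
          inv_mul_cancel₀ hapos.ne']
      set lam := a / |t| with hlamdef
      have htsmall : |t| < 1 / (2 * Λ') := lt_of_lt_of_le ht' hδle3
      have hlamge : lam ≥ Λ := by
        have h1 : Λ' * |t| ≤ Λ' * (1 / (2 * Λ')) :=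
          mul_le_mul_of_nonneg_left htsmall.le hΛ'pos.le
        have h2 : Λ' * (1 / (2 * Λ')) = 1 / 2 := by field_simp
        have h3 : Λ' * |t| ≤ a := by rw [h2] at h1; linarith
        have h4 : Λ' ≤ lam := by
          rw [hlamdef, le_div_iff₀ htpos]; exact h3
        linarith
      have hlampos : 0 < lam := div_pos hapos htpos
      have hsmul : lam • θ = (|t|)⁻¹ • x := by
        rw [hθdef, smul_smul, hlamdef]
        congr 1
        field_simp
      have key := hΛ lam hlamge θ hθnorm
      rw [hsmul] at key
      set c := ξ ((|t|)⁻¹ • x) with hcdef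
      have hqval : h q = |t| * c := by rw [hh q, if_pos hq2']
      have hdiv : c / lam = |t| * c / a := by
        rw [hlamdef]
        field_simp
      rw [hdiv] at key
      set B := ξbar θ with hBdef
      have hθclose : dist θ p.1 < δ₁ := by
        have hinv : 1 ≤ a⁻¹ := one_le_inv_iff₀.mpr ⟨hapos, hale⟩
        have h1 : ‖θ - x‖ = 1 - a := by
          have hsub : θ - x = (a⁻¹ - 1) • x := by
            rw [hθdef, sub_smul, one_smul]
          rw [hsub, norm_smul, Real.norm_eq_abs, ← hadef, abs_of_nonneg (by linarith)]
          field_simp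
        have h2 : dist θ p.1 ≤ ‖θ - x‖ + dist x p.1 := by
          have := dist_triangle θ x p.1
          rwa [dist_eq_norm θ x] at this
        rw [h1] at h2
        have : dist θ p.1 < δ ^ 2 + δ := by linarith
        linarith
      have hBclose : |B - ξbar p.1| < ε / 4 := by
        have := hδ₁ (Set.mem_setOf_eq ▸ hθnorm) hθclose
        rwa [Real.dist_eq] at this
      have hBbound : |B| ≤ M := by
        have := abs_sub_abs_le_abs_sub B (ξbar p.1)
        rw [hMdef]; linarith [le_of_lt hBclose]
      rw [Real.dist_eq, hqval, hpval]
      have e1 : |(|t| * c) - a * B| < ε / 4 := by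
        have heq : (|t| * c) - a * B = a * (|t| * c / a - B) := by field_simp
        rw [heq, abs_mul, abs_of_pos hapos]
        calc a * |(|t| * c / a - B)| ≤ 1 * |(|t| * c / a - B)| :=
              mul_le_mul_of_nonneg_right hale (abs_nonneg _)
          _ = |(|t| * c / a - B)| := one_mul _
          _ < ε / 4 := key
      have e2 : |a * B - B| ≤ δ ^ 2 * M := by
        have heq : a * B - B = (a - 1) * B := by ring
        rw [heq, abs_mul, abs_of_nonpos (by linarith : a - 1 ≤ 0)]
        have h5 : -(a - 1) ≤ δ ^ 2 := by linarith
        exact mul_le_mul h5 hBbound (abs_nonneg _) (by positivity)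
      have hδ2M : δ ^ 2 * M ≤ ε / 4 := by
        have h1 : δ ^ 2 * M ≤ δ * M := mul_le_mul_of_nonneg_right hδsq hMpos.le
        have h2 : δ * M ≤ ε / 4 := by
          rw [← le_div_iff₀ hMpos]
          calc δ ≤ ε / (4 * M) := hδle2
            _ = ε / 4 / M := (div_div ε 4 M).symm
        linarith
      have tri : |(|t| * c) - ξbar p.1| ≤
          |(|t| * c) - a * B| + |a * B - B| + |B - ξbar p.1| := by
        have t1 := abs_sub_le (|t| * c) (a * B) (ξbar p.1)
        have t2 := abs_sub_le (a * B) B (ξbar p.1)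
        linarith
      linarith
    · -- q.2 = 0
      have hq1' : ‖q.1‖ = 1 := by
        refine sq_eq_one_nonneg (norm_nonneg q.1) ?_
        rw [hq2'] at hq1; simpa using hq1
      have hqval : h q = ξbar q.1 := by rw [hh q]; simp [hq2']
      rw [hqval, hpval]
      have := hδ₁ (Set.mem_setOf_eq ▸ hq1') (lt_of_lt_of_le hd1 (by linarith))
      rw [Real.dist_eq] at this ⊢
      linarith
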